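/- Let ξ be a design and z ∈ X, and consider the one-parameter family of matrices α ↦ (1−α)·M(ξ) + α·( g(z)g(z)ᵀ + C ), which is the information matrix of the mixture of ξ with the single-point design at z. The function α ↦ log det( (1−α)·M(ξ) + α·( g(z)g(z)ᵀ + C ) ) is differentiable at α = 0 with derivative equal to d(z,ξ) + Tr( M(ξ)⁻¹ C ) − p, where d(z,ξ) = g(z)ᵀ M(ξ)⁻¹ g(z). -/

import Mathlib

open MeasureTheory Matrix

/-- The information matrix `M(ξ) = ∫_X g(z) g(z)ᵀ dξ(z) + C` of a design `ξ`
(a Borel probability measure on `X ⊆ ℝ^d`), defined entrywise. -/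
noncomputable def infoMatrix {d p : ℕ} {X : Set (Fin d → ℝ)}
    (g : (Fin d → ℝ) → Fin p → ℝ) (C : Matrix (Fin p) (Fin p) ℝ)
    (ξ : Measure X) : Matrix (Fin p) (Fin p) ℝ :=
  Matrix.of fun i j => (∫ z, g (z : Fin d → ℝ) i * g (z : Fin d → ℝ) j ∂ξ) + C i j

/-- The prediction variance `d(z,ξ) = g(z)ᵀ M(ξ)⁻¹ g(z)`. -/
noncomputable def predVar {d p : ℕ} {X : Set (Fin d → ℝ)}
    (g : (Fin d → ℝ) → Fin p → ℝ) (C : Matrix (Fin p) (Fin p) ℝ)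
    (ξ : Measure X) (z : Fin d → ℝ) : ℝ :=
  g z ⬝ᵥ ((infoMatrix g C ξ)⁻¹ *ᵥ g z)

lemma hasDerivAt_det_one_add_smul {p : ℕ} (A : Matrix (Fin p) (Fin p) ℝ) :
    HasDerivAt (fun α : ℝ => (1 + α • A).det) A.trace 0 := by
  have key : ∀ α : ℝ, (1 + α • A).det =
      ∑ σ : Equiv.Perm (Fin p), ((Equiv.Perm.sign σ : ℤ) : ℝ) *
        ∏ i, ((1 : Matrix (Fin p) (Fin p) ℝ) (σ i) i + α * A (σ i) i) := by
    intro α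
    rw [Matrix.det_apply']
    refine Finset.sum_congr rfl fun σ _ => ?_
    simp [Matrix.add_apply, Matrix.smul_apply, smul_eq_mul]
  have hD : HasDerivAt
      (fun α : ℝ => ∑ σ : Equiv.Perm (Fin p), ((Equiv.Perm.sign σ : ℤ) : ℝ) *
        ∏ i, ((1 : Matrix (Fin p) (Fin p) ℝ) (σ i) i + α * A (σ i) i))
      (∑ σ : Equiv.Perm (Fin p), ((Equiv.Perm.sign σ : ℤ) : ℝ) *
        ∑ i, (∏ j ∈ Finset.univ.erase i,
          ((1 : Matrix (Fin p) (Fin p) ℝ) (σ j) j + (0:ℝ) * A (σ j) j)) •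
          A (σ i) i) 0 := by
    refine HasDerivAt.fun_sum fun σ _ => ?_
    refine HasDerivAt.const_mul _ ?_
    exact HasDerivAt.fun_finset_prod fun i _ =>
      ((hasDerivAt_mul_const (A (σ i) i)).const_add _)
  have hval : (∑ σ : Equiv.Perm (Fin p), ((Equiv.Perm.sign σ : ℤ) : ℝ) *
        ∑ i, (∏ j ∈ Finset.univ.erase i,
          ((1 : Matrix (Fin p) (Fin p) ℝ) (σ j) j + (0:ℝ) * A (σ j) j)) •
          A (σ i) i) = A.trace := by
    rw [Finset.sum_eq_single 1]
    · simp only [Equiv.Perm.sign_one, Units.val_one, Int.cast_one, one_mul,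
        Equiv.Perm.one_apply, zero_mul, add_zero, Matrix.one_apply_eq,
        Finset.prod_const_one, one_smul]
      rw [Matrix.trace]
      refine Finset.sum_congr rfl fun i _ => ?_
      rw [show (∏ y ∈ Finset.univ.erase i,
          (1:Matrix (Fin p) (Fin p) ℝ) ((1 : Equiv.Perm (Fin p)) y) y) = 1 from
        Finset.prod_eq_one fun j _ => by rw [Equiv.Perm.one_apply]; exact Matrix.one_apply_eq j]
      rw [one_smul, Matrix.diag]
    · intro σ _ hσ
      have : ∀ i : Fin p, (∏ j ∈ Finset.univ.erase i,
          ((1 : Matrix (Fin p) (Fin p) ℝ) (σ j) j)) = 0 := by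
        intro i
        obtain ⟨a, ha⟩ : ∃ a, σ a ≠ a := by
          by_contra h
          push_neg at h
          exact hσ (Equiv.ext h)
        rcases eq_or_ne a i with rfl | hai
        · refine Finset.prod_eq_zero (i := σ a) (Finset.mem_erase.mpr ⟨ha, Finset.mem_univ _⟩) ?_
          have : σ (σ a) ≠ σ a := fun h => ha (σ.injective h)
          simp [Matrix.one_apply_ne this]
        · refine Finset.prod_eq_zero (i := a) (Finset.mem_erase.mpr ⟨hai, Finset.mem_univ _⟩) ?_
          simp [Matrix.one_apply_ne ha]
      simp [this]
    · simp
  rw [← hval]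
  exact hD.congr_deriv rfl |>.congr_of_eventuallyEq (by filter_upwards with α; rw [key])

lemma trace_mul_vecMulVec {p : ℕ} (Q : Matrix (Fin p) (Fin p) ℝ) (u : Fin p → ℝ) :
    Matrix.trace (Q * vecMulVec u u) = u ⬝ᵥ (Q *ᵥ u) := by
  simp only [Matrix.trace, Matrix.diag, Matrix.mul_apply, Matrix.vecMulVec_apply,
    dotProduct, Matrix.mulVec, Finset.mul_sum]
  refine Finset.sum_congr rfl fun i _ => Finset.sum_congr rfl fun k _ => by ring

/-- The map `α ↦ log det((1−α)M(ξ) + α(g(z)g(z)ᵀ + C))`, obtained by mixing `ξ` with the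
single-point design at `z`, has derivative `d(z,ξ) + Tr(M(ξ)⁻¹ C) − p` at `α = 0`. -/
theorem hasDerivAt_logDet_point_mixture {d p : ℕ} (hd : 1 ≤ d) (hp : 1 ≤ p)
    {X : Set (Fin d → ℝ)} (hX : IsCompact X)
    {g : (Fin d → ℝ) → Fin p → ℝ} (hg : Continuous g)
    {C : Matrix (Fin p) (Fin p) ℝ} (hC : C.PosDef)
    (ξ : Measure X) [IsProbabilityMeasure ξ]
    (z : Fin d → ℝ) (hz : z ∈ X) :
    HasDerivAt
      (fun α : ℝ =>
        Real.log ((1 - α) • infoMatrix g C ξ + α • (vecMulVec (g z) (g z) + C)).det)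
      (predVar g C ξ z + Matrix.trace ((infoMatrix g C ξ)⁻¹ * C) - p) 0 := by
  haveI : CompactSpace X := isCompact_iff_compactSpace.mp hX
  set M := infoMatrix g C ξ with hM
  set B := vecMulVec (g z) (g z) + C with hB
  -- integrability of the entries
  have hcont : ∀ i : Fin p, Continuous fun w : X => g (w : Fin d → ℝ) i := fun i =>
    (continuous_apply i).comp (hg.comp continuous_subtype_val)
  have hint : ∀ i j : Fin p,
      MeasureTheory.Integrable (fun w : X => g (w : Fin d → ℝ) i * g (w : Fin d → ℝ) j) ξ := by
    intro i j
    refine Continuous.integrable_of_hasCompactSupport ((hcont i).mul (hcont j)) ?_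
    rw [HasCompactSupport]
    exact (isClosed_tsupport _).isCompact
  -- positive definiteness of M
  have hN : (Matrix.of fun i j =>
      ∫ w, g (w : Fin d → ℝ) i * g (w : Fin d → ℝ) j ∂ξ : Matrix (Fin p) (Fin p) ℝ).PosSemidef := by
    refine Matrix.PosSemidef.of_dotProduct_mulVec_nonneg ?_ ?_
    · ext i j
      simp only [Matrix.conjTranspose_apply, Matrix.of_apply, star_trivial]
      exact congrArg _ (funext fun w => mul_comm _ _)
    · intro x
      have key : (star x) ⬝ᵥ ((Matrix.of fun i j =>
          ∫ w, g (w : Fin d → ℝ) i * g (w : Fin d → ℝ) j ∂ξ) *ᵥ x)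
          = ∫ w, (∑ i, x i * g (w : Fin d → ℝ) i) ^ 2 ∂ξ := by
        simp only [dotProduct, Matrix.mulVec, Matrix.of_apply, star_trivial,
          Pi.star_apply, dotProduct]
        have step : ∀ i : Fin p,
            x i * (∑ j, (∫ w, g (w : Fin d → ℝ) i * g (w : Fin d → ℝ) j ∂ξ) * x j)
            = ∫ w, ∑ j, x i * g (w : Fin d → ℝ) i * (x j * g (w : Fin d → ℝ) j) ∂ξ := by
          intro i
          rw [MeasureTheory.integral_finset_sum _ fun j _ => by
            exact ((hint i j).const_mul (x i)).mul_const (x j) |>.congr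
              (by filter_upwards with w; ring)]
          rw [Finset.mul_sum]
          refine Finset.sum_congr rfl fun j _ => ?_
          calc x i * ((∫ w, g (w : Fin d → ℝ) i * g (w : Fin d → ℝ) j ∂ξ) * x j)
              = (x i * x j) * ∫ w, g (w : Fin d → ℝ) i * g (w : Fin d → ℝ) j ∂ξ := by ring
            _ = ∫ w, (x i * x j) * (g (w : Fin d → ℝ) i * g (w : Fin d → ℝ) j) ∂ξ :=
                (MeasureTheory.integral_const_mul _ _).symm
            _ = ∫ w, x i * g (w : Fin d → ℝ) i * (x j * g (w : Fin d → ℝ) j) ∂ξ := by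
                refine congrArg _ (funext fun w => by ring)
        rw [Finset.sum_congr rfl fun i _ => step i,
          ← MeasureTheory.integral_finset_sum]
        · refine congrArg _ (funext fun w => ?_)
          rw [sq, Finset.sum_mul_sum]
        · intro i _
          refine MeasureTheory.integrable_finset_sum _ fun j _ => ?_
          exact ((hint i j).const_mul (x i)).mul_const (x j) |>.congr
            (by filter_upwards with w; ring)
      rw [key]
      exact MeasureTheory.integral_nonneg fun w => sq_nonneg _
  have hMC : M = (Matrix.of fun i j =>
      ∫ w, g (w : Fin d → ℝ) i * g (w : Fin d → ℝ) j ∂ξ) + C := by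
    ext i j; rfl
  have hMpd : M.PosDef := hMC ▸ Matrix.PosDef.posSemidef_add hN hC
  have hdet : M.det ≠ 0 := hMpd.det_pos.ne'
  have hMu : IsUnit M.det := hdet.isUnit
  -- the affine family factors through M
  set A := M⁻¹ * (B - M) with hA
  have hfac : ∀ α : ℝ, (1 - α) • M + α • B = M * (1 + α • A) := by
    intro α
    rw [Matrix.mul_add, Matrix.mul_one, Matrix.mul_smul, hA, ← Matrix.mul_assoc,
      Matrix.mul_nonsing_inv M hMu, Matrix.one_mul, sub_smul, one_smul, smul_sub]
    abel
  have hdetfun : (fun α : ℝ => ((1 - α) • M + α • B).det)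
      = fun α : ℝ => M.det * (1 + α • A).det := by
    funext α; rw [hfac α, Matrix.det_mul]
  have hder : HasDerivAt (fun α : ℝ => ((1 - α) • M + α • B).det)
      (M.det * A.trace) 0 := by
    rw [hdetfun]
    exact (hasDerivAt_det_one_add_smul A).const_mul M.det
  have hval0 : ((1 - (0:ℝ)) • M + (0:ℝ) • B).det ≠ 0 := by
    simp only [sub_zero, one_smul, zero_smul, add_zero]
    exact hdet
  have hlog := hder.log hval0
  have hsimp : M.det * A.trace / ((1 - (0:ℝ)) • M + (0:ℝ) • B).det = A.trace := by
    simp only [sub_zero, one_smul, zero_smul, add_zero]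
    field_simp
  rw [hsimp] at hlog
  -- compute the trace
  have htr : A.trace = predVar g C ξ z + Matrix.trace (M⁻¹ * C) - p := by
    rw [hA, Matrix.mul_sub, Matrix.trace_sub, Matrix.nonsing_inv_mul M hMu,
      Matrix.trace_one, hB, Matrix.mul_add, Matrix.trace_add, trace_mul_vecMulVec]
    simp [predVar, hM]
  rw [htr] at hlog
  exact hlog
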